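/- Any two increasing homeomorphisms of the real line with no fixed points, both satisfying f(x) > x for all x (or both f(x) < x for all x), are topologically conjugate. -/

import Mathlib

open Filter

/-- Any increasing fixed-point-free bijection of ℝ above the diagonal is
semi-conjugate (via a strictly monotone surjection) to translation by 1. -/
private lemma lemA (f : ℝ → ℝ) (hfc : Continuous f) (hfm : StrictMono f)
    (hfb : Function.Bijective f) (hx : ∀ x, x < f x) :
    ∃ h : ℝ → ℝ, StrictMono h ∧ Function.Surjective h ∧ ∀ x, h (f x) = h x + 1 := by
  classical
  set E : Equiv.Perm ℝ := Equiv.ofBijective f hfb with hE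
  set T : ℤ → ℝ → ℝ := fun n x => (E ^ n) x with hT
  have hT1 : ∀ x, T 1 x = f x := by
    intro x; simp [hT, hE]
  have hT0 : ∀ x, T 0 x = x := by intro x; simp [hT]
  have hTadd : ∀ m n : ℤ, ∀ x, T (m + n) x = T m (T n x) := by
    intro m n x; simp [hT, zpow_add, Equiv.Perm.mul_apply]
  have hfTneg : ∀ x, f (T (-1) x) = x := by
    intro x
    have h1 := hTadd 1 (-1) x
    rw [add_neg_cancel, hT0, hT1] at h1
    exact h1.symm
  have hTneg1 : StrictMono (T (-1)) := by
    intro u v huv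
    by_contra hle
    push_neg at hle
    have h2 : f (T (-1) v) ≤ f (T (-1) u) := hfm.monotone hle
    rw [hfTneg, hfTneg] at h2
    exact absurd huv (not_lt.mpr h2)
  have hTmono : ∀ n : ℤ, StrictMono (T n) := by
    intro n
    induction n using Int.induction_on with
    | zero => intro u v huv; simpa [hT0] using huv
    | succ k ih =>
        have : T ((k : ℤ) + 1) = fun x => T 1 (T k x) := by
          funext x; rw [add_comm, hTadd]
        rw [this]
        have h1 : StrictMono (T 1) := by
          have : T (1 : ℤ) = f := funext hT1
          rw [this]; exact hfm
        exact h1.comp ih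
    | pred k ih =>
        have : T (-(k : ℤ) - 1) = fun x => T (-1) (T (-k) x) := by
          funext x; rw [sub_eq_add_neg, add_comm, hTadd]
        rw [this]
        exact hTneg1.comp ih
  set a : ℤ → ℝ := fun n => T n 0 with ha
  have ha_Ta : ∀ n m : ℤ, T n (a m) = a (n + m) := by
    intro n m; rw [ha]; simp only []; rw [← hTadd]
  have ha_succ : ∀ n : ℤ, a (n + 1) = f (a n) := by
    intro n
    have := ha_Ta 1 n
    rw [hT1] at this
    rw [add_comm] at this
    exact this.symm
  have ha_mono : StrictMono a := by
    apply strictMono_int_of_lt_succ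
    intro n; rw [ha_succ]; exact hx _
  have ha0 : a 0 = 0 := hT0 0
  have ha1pos : 0 < a 1 := by
    have := ha_mono (show (0:ℤ) < 1 by norm_num)
    rwa [ha0] at this
  -- unbounded above
  have habove : ∀ x : ℝ, ∃ n : ℤ, x < a n := by
    by_contra hcon
    push_neg at hcon
    obtain ⟨x, hxall⟩ := hcon
    set b : ℕ → ℝ := fun k => a k with hb
    have hbmono : Monotone b := fun i j hij => ha_mono.monotone (by exact_mod_cast hij)
    have hbdd : BddAbove (Set.range b) := ⟨x, by rintro _ ⟨k, rfl⟩; exact hxall k⟩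
    have hlim : Tendsto b atTop (nhds (⨆ k, b k)) := tendsto_atTop_ciSup hbmono hbdd
    have hlim2 : Tendsto (fun k => f (b k)) atTop (nhds (f (⨆ k, b k))) :=
      (hfc.tendsto _).comp hlim
    have hshift : (fun k => f (b k)) = fun k => b (k + 1) := by
      funext k
      have hc : ((k + 1 : ℕ) : ℤ) = (k : ℤ) + 1 := by push_cast; ring
      rw [hb]; simp only []; rw [hc, ha_succ]
    rw [hshift] at hlim2
    have hlim3 : Tendsto (fun k => b (k + 1)) atTop (nhds (⨆ k, b k)) :=
      hlim.comp (tendsto_add_atTop_nat 1)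
    have : f (⨆ k, b k) = ⨆ k, b k := tendsto_nhds_unique hlim2 hlim3
    exact absurd this.symm (ne_of_lt (hx _))
  -- unbounded below
  have hbelow : ∀ x : ℝ, ∃ n : ℤ, a n ≤ x := by
    by_contra hcon
    push_neg at hcon
    obtain ⟨x, hxall⟩ := hcon
    set b : ℕ → ℝ := fun k => a (-k) with hb
    have hbsucc : ∀ k : ℕ, b (k + 1) = T (-1) (b k) := by
      intro k
      have hc : (-(↑(k + 1) : ℤ)) = -1 + (-(k : ℤ)) := by push_cast; ring
      rw [hb]; simp only []; rw [hc]
      exact (ha_Ta (-1) (-(k : ℤ))).symm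
    have hbanti : Antitone b := by
      apply antitone_nat_of_succ_le
      intro k
      rw [hbsucc]
      have h1 : f (T (-1) (b k)) = b k := hfTneg _
      have h2 : T (-1) (b k) < f (T (-1) (b k)) := hx _
      rw [h1] at h2; exact le_of_lt h2
    have hbdd : BddBelow (Set.range b) := ⟨x, by rintro _ ⟨k, rfl⟩; exact le_of_lt (hxall _)⟩
    have hlim : Tendsto b atTop (nhds (⨅ k, b k)) := tendsto_atTop_ciInf hbanti hbdd
    -- T (-1) is continuous since it's the inverse of the order iso f
    have hFsymm : Continuous (T (-1)) := by
      set F : ℝ ≃o ℝ := StrictMono.orderIsoOfSurjective f hfm hfb.2 with hF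
      have hcoe : ∀ y, F y = f y := fun y => by
        rw [hF, StrictMono.coe_orderIsoOfSurjective]
      have heq : T (-1) = F.symm := by
        funext y
        apply hfb.1
        rw [hfTneg, ← hcoe, OrderIso.apply_symm_apply]
      rw [heq]
      exact F.toHomeomorph.symm.continuous
    have hlim2 : Tendsto (fun k => T (-1) (b k)) atTop (nhds (T (-1) (⨅ k, b k))) :=
      (hFsymm.tendsto _).comp hlim
    have hshift : (fun k => T (-1) (b k)) = fun k => b (k + 1) := by
      funext k; rw [hbsucc]
    rw [hshift] at hlim2
    have hlim3 : Tendsto (fun k => b (k + 1)) atTop (nhds (⨅ k, b k)) :=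
      hlim.comp (tendsto_add_atTop_nat 1)
    have heq : T (-1) (⨅ k, b k) = ⨅ k, b k := tendsto_nhds_unique hlim2 hlim3
    have : (⨅ k, b k) < f (T (-1) (⨅ k, b k)) := by rw [heq]; exact hx _
    rw [hfTneg] at this
    exact lt_irrefl _ this
  -- existence of the "floor" index
  have hnx : ∀ x : ℝ, ∃ n : ℤ, a n ≤ x ∧ x < a (n + 1) := by
    intro x
    obtain ⟨k, hk⟩ := habove x
    obtain ⟨N, hN1, hN2⟩ := Int.exists_greatest_of_bdd
      (P := fun n => a n ≤ x)
      ⟨k, fun z hz => by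
        by_contra hlt
        push_neg at hlt
        exact absurd (le_trans (ha_mono.monotone (le_of_lt hlt)) hz) (not_le.mpr hk)⟩
      (hbelow x)
    refine ⟨N, hN1, ?_⟩
    by_contra hle
    push_neg at hle
    exact absurd (hN2 (N + 1) hle) (by omega)
  set nn : ℝ → ℤ := fun x => Classical.choose (hnx x) with hnn
  have hspec : ∀ x, a (nn x) ≤ x ∧ x < a (nn x + 1) := fun x => Classical.choose_spec (hnx x)
  have huniq : ∀ (x : ℝ) (m : ℤ), a m ≤ x → x < a (m + 1) → nn x = m := by
    intro x m h1 h2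
    rcases lt_trichotomy (nn x) m with h | h | h
    · exact absurd (le_trans (ha_mono.monotone (by omega : nn x + 1 ≤ m)) h1)
        (not_le.mpr (hspec x).2)
    · exact h
    · exact absurd (le_trans (ha_mono.monotone (by omega : m + 1 ≤ nn x)) (hspec x).1)
        (not_le.mpr h2)
  set h : ℝ → ℝ := fun x => (nn x : ℝ) + T (-(nn x)) x / a 1 with hh
  have hrange : ∀ x, 0 ≤ T (-(nn x)) x ∧ T (-(nn x)) x < a 1 := by
    intro x
    constructor
    · have := (hTmono (-(nn x))).monotone (hspec x).1
      rwa [ha_Ta, neg_add_cancel, ha0] at this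
    · have := hTmono (-(nn x)) (hspec x).2
      rwa [ha_Ta, show -(nn x) + (nn x + 1) = 1 by ring] at this
  have hnnsucc : ∀ x, nn (f x) = nn x + 1 := by
    intro x
    apply huniq
    · rw [ha_succ]; exact hfm.monotone (hspec x).1
    · rw [show nn x + 1 + 1 = (nn x + 1) + 1 by ring, ha_succ]
      exact hfm (hspec x).2
  refine ⟨h, ?_, ?_, ?_⟩
  · -- StrictMono
    intro x y hlt
    have hle : nn x ≤ nn y := by
      by_contra hgt
      push_neg at hgt
      have : a (nn y + 1) ≤ a (nn x) := ha_mono.monotone (by omega)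
      have := lt_of_lt_of_le (hspec y).2 (le_trans this (hspec x).1)
      exact absurd hlt (not_lt.mpr (le_of_lt this))
    rcases eq_or_lt_of_le hle with heq | hltn
    · rw [hh]
      simp only []
      rw [← heq]
      have hdiv : T (-(nn x)) x / a 1 < T (-(nn x)) y / a 1 :=
        div_lt_div_of_pos_right (hTmono (-(nn x)) hlt) ha1pos
      linarith
    · have h1 : h x < (nn x : ℝ) + 1 := by
        rw [hh]
        have : T (-(nn x)) x / a 1 < 1 := (div_lt_one ha1pos).mpr (hrange x).2
        linarith
      have h2 : (nn y : ℝ) ≤ h y := by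
        rw [hh]
        have : 0 ≤ T (-(nn y)) y / a 1 := div_nonneg (hrange y).1 (le_of_lt ha1pos)
        linarith
      have h3 : (nn x : ℝ) + 1 ≤ (nn y : ℝ) := by exact_mod_cast hltn
      linarith
  · -- Surjective
    intro y
    set n : ℤ := ⌊y⌋ with hn
    set r : ℝ := (y - n) * a 1 with hr
    have hr0 : 0 ≤ r := mul_nonneg (by rw [hn]; linarith [Int.floor_le y]) (le_of_lt ha1pos)
    have hr1 : r < a 1 := by
      have : y - (n : ℝ) < 1 := by rw [hn]; linarith [Int.lt_floor_add_one y]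
      calc r < 1 * a 1 := by rw [hr]; exact mul_lt_mul_of_pos_right this ha1pos
        _ = a 1 := one_mul _
    refine ⟨T n r, ?_⟩
    have hTnr : T (-n) (T n r) = r := by rw [← hTadd, neg_add_cancel, hT0]
    have hnnx : nn (T n r) = n := by
      apply huniq
      · have := (hTmono n).monotone hr0
        rwa [show T n 0 = a n from rfl] at this
      · have := hTmono n hr1
        rwa [ha_Ta] at this
    rw [hh]
    simp only []
    rw [hnnx, hTnr, hr]
    have hne : a 1 ≠ 0 := ne_of_gt ha1pos
    field_simp
    ring
  · -- conjugation
    intro x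
    rw [hh]
    simp only []
    rw [hnnsucc x]
    have : T (-(nn x + 1)) (f x) = T (-(nn x)) x := by
      rw [← hT1 x, ← hTadd, show -(nn x + 1) + 1 = -(nn x) by ring]
    rw [this]
    push_cast
    ring

/-- Conjugacy for the "above the diagonal" case. -/
private lemma lemB (f g : ℝ → ℝ)
    (hfc : Continuous f) (hfm : StrictMono f) (hfb : Function.Bijective f)
    (hgc : Continuous g) (hgm : StrictMono g) (hgb : Function.Bijective g)
    (hf : ∀ x, x < f x) (hg : ∀ x, x < g x) :
    ∃ h : ℝ → ℝ, Continuous h ∧ Function.Bijective h ∧ ∀ x, h (f x) = g (h x) := by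
  obtain ⟨p, hpm, hps, hpc⟩ := lemA f hfc hfm hfb hf
  obtain ⟨q, hqm, hqs, hqc⟩ := lemA g hgc hgm hgb hg
  set Q : ℝ ≃o ℝ := StrictMono.orderIsoOfSurjective q hqm hqs with hQ
  have hQcoe : ∀ y, Q y = q y := fun y => by rw [hQ, StrictMono.coe_orderIsoOfSurjective]
  set P : ℝ ≃o ℝ := StrictMono.orderIsoOfSurjective p hpm hps with hP
  have hPcoe : ∀ y, P y = p y := fun y => by rw [hP, StrictMono.coe_orderIsoOfSurjective]
  refine ⟨fun x => Q.symm (P x), ?_, ?_, ?_⟩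
  · exact Q.toHomeomorph.symm.continuous.comp P.toHomeomorph.continuous
  · exact (Q.symm.bijective).comp P.bijective
  · intro x
    apply Q.injective
    show Q (Q.symm (P (f x))) = Q (g (Q.symm (P x)))
    rw [OrderIso.apply_symm_apply, hPcoe, hpc, hQcoe, hqc, ← hQcoe,
      OrderIso.apply_symm_apply, hPcoe]

/-- two increasing fixed-point-free homeomorphisms of the real line,
both above the diagonal (or both below the diagonal), are topologically conjugate. -/
theorem stmt_8
    (f g : ℝ → ℝ)
    (hfc : Continuous f) (hfm : StrictMono f) (hfb : Function.Bijective f)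
    (hgc : Continuous g) (hgm : StrictMono g) (hgb : Function.Bijective g)
    (hside : ((∀ x, x < f x) ∧ (∀ x, x < g x)) ∨ ((∀ x, f x < x) ∧ (∀ x, g x < x))) :
    ∃ h : ℝ → ℝ, Continuous h ∧ Function.Bijective h ∧ ∀ x, h (f x) = g (h x) := by
  rcases hside with ⟨hf, hg⟩ | ⟨hf, hg⟩
  · exact lemB f g hfc hfm hfb hgc hgm hgb hf hg
  · set F : ℝ ≃o ℝ := StrictMono.orderIsoOfSurjective f hfm hfb.2 with hF
    have hFcoe : ∀ y, F y = f y := fun y => by rw [hF, StrictMono.coe_orderIsoOfSurjective]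
    set G : ℝ ≃o ℝ := StrictMono.orderIsoOfSurjective g hgm hgb.2 with hG
    have hGcoe : ∀ y, G y = g y := fun y => by rw [hG, StrictMono.coe_orderIsoOfSurjective]
    have hf' : ∀ x, x < F.symm x := by
      intro x
      have := hf (F.symm x)
      rwa [← hFcoe, OrderIso.apply_symm_apply] at this
    have hg' : ∀ x, x < G.symm x := by
      intro x
      have := hg (G.symm x)
      rwa [← hGcoe, OrderIso.apply_symm_apply] at this
    obtain ⟨h, hhc, hhb, hhconj⟩ := lemB F.symm G.symm
      F.toHomeomorph.symm.continuous F.symm.strictMono F.symm.bijective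
      G.toHomeomorph.symm.continuous G.symm.strictMono G.symm.bijective
      hf' hg'
    refine ⟨h, hhc, hhb, ?_⟩
    intro x
    have h1 := hhconj (f x)
    rw [← hFcoe, OrderIso.symm_apply_apply] at h1
    rw [hFcoe] at h1
    rw [h1, ← hGcoe, OrderIso.apply_symm_apply]
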